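/- Let T ⊆ ℝⁿ be open and let c : T → ℝⁿ be a C¹ map such that for every x ∈ T one has x ≠ c(x) and the derivative of c at x vanishes on the orthogonal complement of x − c(x), i.e. (Dc)ₓ(v) = 0 whenever ⟨v, x − c(x)⟩ = 0. Then the C¹ unit vector field η(x) = (x − c(x))/‖x − c(x)‖ satisfies div η(x) = (n−1)/‖x − c(x)‖ for every x ∈ T. -/

import Mathlib

open MeasureTheory

/-- The divergence of a vector field on Euclidean space: the trace of its derivative. -/
noncomputable def divergence {n : ℕ}
    (X : EuclideanSpace ℝ (Fin n) → EuclideanSpace ℝ (Fin n))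
    (x : EuclideanSpace ℝ (Fin n)) : ℝ :=
  LinearMap.trace ℝ (EuclideanSpace ℝ (Fin n)) (fderiv ℝ X x).toLinearMap

lemma trace_eq_sum_coord {n : ℕ} (A : EuclideanSpace ℝ (Fin n) →L[ℝ] EuclideanSpace ℝ (Fin n)) :
    LinearMap.trace ℝ (EuclideanSpace ℝ (Fin n)) A.toLinearMap
      = ∑ i, A (EuclideanSpace.single i 1) i := by
  rw [LinearMap.trace_eq_matrix_trace ℝ ((EuclideanSpace.basisFun (Fin n) ℝ).toBasis),
    Matrix.trace]
  refine Finset.sum_congr rfl fun i _ => ?_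
  rw [Matrix.diag_apply, LinearMap.toMatrix_apply]
  simp [OrthonormalBasis.coe_toBasis, OrthonormalBasis.coe_toBasis_repr_apply,
    EuclideanSpace.basisFun_apply, EuclideanSpace.basisFun_repr]

/-- Divergence of the unit radial field of a family of spherical caps with moving centers:
if the center map `c` is constant along each cap, then the unit field
`η x = (x - c x)/‖x - c x‖` has divergence `(n-1)/‖x - c x‖`. -/
theorem stmt10 {n : ℕ} (T : Set (EuclideanSpace ℝ (Fin n))) (hT : IsOpen T)
    (c : EuclideanSpace ℝ (Fin n) → EuclideanSpace ℝ (Fin n))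
    (hc : ContDiffOn ℝ 1 c T)
    (hne : ∀ x ∈ T, x ≠ c x)
    (hconst : ∀ x ∈ T, ∀ v : EuclideanSpace ℝ (Fin n),
      (inner ℝ v (x - c x) : ℝ) = 0 → fderiv ℝ c x v = 0) :
    ∀ x ∈ T, divergence (fun y => ‖y - c y‖⁻¹ • (y - c y)) x = ((n : ℝ) - 1) / ‖x - c x‖ := by
  intro x hx
  have hxT : T ∈ nhds x := hT.mem_nhds hx
  have hcd : DifferentiableAt ℝ c x := ((hc x hx).contDiffAt hxT).differentiableAt one_ne_zero
  set u : EuclideanSpace ℝ (Fin n) := x - c x with hu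
  have hune : u ≠ 0 := sub_ne_zero.mpr (hne x hx)
  set r : ℝ := ‖u‖ with hrdef
  have hr : 0 < r := norm_pos_iff.mpr hune
  set D := fderiv ℝ c x with hDdef
  have hD : HasFDerivAt c D x := hcd.hasFDerivAt
  set W : EuclideanSpace ℝ (Fin n) →L[ℝ] EuclideanSpace ℝ (Fin n) :=
    ContinuousLinearMap.id ℝ _ - D with hWdef
  have hW : HasFDerivAt (fun y => y - c y) W x := (hasFDerivAt_id x).sub hD
  -- key: D v = (⟪v,u⟫/r²) • D u
  have hkey : ∀ v, D v = ((inner ℝ v u : ℝ) / r ^ 2) • D u := by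
    intro v
    have hperp : (inner ℝ (v - ((inner ℝ v u : ℝ) / r ^ 2) • u) u : ℝ) = 0 := by
      rw [inner_sub_left, real_inner_smul_left, real_inner_self_eq_norm_sq]
      field_simp
      simp [hrdef]
    have h0 := hconst x hx _ hperp
    rw [map_sub, ContinuousLinearMap.map_smul] at h0
    exact sub_eq_zero.mp h0
  -- derivative of y ↦ ⟪y - c y, y - c y⟫
  set Φ : EuclideanSpace ℝ (Fin n) →L[ℝ] ℝ := (fderivInnerCLM ℝ (u, u)).comp (W.prod W) with hΦdef
  have hφ : HasFDerivAt (fun y => (inner ℝ (y - c y) (y - c y) : ℝ)) Φ x := hW.inner ℝ hW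
  have hinner_uu : (inner ℝ u u : ℝ) = r ^ 2 := real_inner_self_eq_norm_sq u
  have hsq : HasDerivAt Real.sqrt (1 / (2 * r)) ((inner ℝ u u : ℝ)) := by
    have h := Real.hasDerivAt_sqrt (x := (inner ℝ u u : ℝ))
      (by rw [hinner_uu]; exact pow_ne_zero 2 hr.ne')
    rw [hinner_uu, Real.sqrt_sq hr.le] at h
    exact hinner_uu ▸ h
  have h1 : HasFDerivAt (fun y => Real.sqrt (inner ℝ (y - c y) (y - c y) : ℝ))
      ((1 / (2 * r)) • Φ) x := hsq.comp_hasFDerivAt x hφ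
  have hinv : HasDerivAt (fun t : ℝ => t⁻¹) (-(r ^ 2)⁻¹) (Real.sqrt (inner ℝ u u : ℝ)) := by
    rw [hinner_uu, Real.sqrt_sq hr.le]; exact hasDerivAt_inv hr.ne'
  have h2 : HasFDerivAt (fun y => (Real.sqrt (inner ℝ (y - c y) (y - c y) : ℝ))⁻¹)
      ((-(r ^ 2)⁻¹) • ((1 / (2 * r)) • Φ)) x := hinv.comp_hasFDerivAt x h1
  have heq : (fun y : EuclideanSpace ℝ (Fin n) => ‖y - c y‖⁻¹)
      = fun y => (Real.sqrt (inner ℝ (y - c y) (y - c y) : ℝ))⁻¹ := by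
    funext y
    rw [real_inner_self_eq_norm_mul_norm, Real.sqrt_mul_self (norm_nonneg _)]
  have hg : HasFDerivAt (fun y => ‖y - c y‖⁻¹) ((-(r ^ 2)⁻¹) • ((1 / (2 * r)) • Φ)) x := by
    rw [heq]; exact h2
  set G : EuclideanSpace ℝ (Fin n) →L[ℝ] ℝ := (-(r ^ 2)⁻¹) • ((1 / (2 * r)) • Φ) with hGdef
  have hη : HasFDerivAt (fun y => ‖y - c y‖⁻¹ • (y - c y))
      (‖x - c x‖⁻¹ • W + G.smulRight (x - c x)) x := hg.smul hW
  rw [divergence, hη.fderiv, trace_eq_sum_coord]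
  -- now compute the sum
  set q : ℝ := ∑ i, u i * D u i with hqdef
  have hinner_vu : ∀ v : EuclideanSpace ℝ (Fin n), (inner ℝ v u : ℝ) = ∑ i, v i * u i := by
    intro v
    simp [PiLp.inner_apply, RCLike.inner_apply]
    exact Finset.sum_congr rfl fun i _ => mul_comm _ _
  have hq_eq : (inner ℝ u (D u) : ℝ) = q := by
    simp [PiLp.inner_apply, RCLike.inner_apply, hqdef]
    exact Finset.sum_congr rfl fun i _ => mul_comm _ _
  have hei : ∀ i : Fin n, (inner ℝ (EuclideanSpace.single i (1:ℝ)) u : ℝ) = u i := by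
    intro i
    simp [EuclideanSpace.inner_single_left]
  have hDei : ∀ i : Fin n, D (EuclideanSpace.single i (1:ℝ)) = ((u i) / r ^ 2) • D u := by
    intro i
    rw [hkey, hei]
  have hWei : ∀ i : Fin n, W (EuclideanSpace.single i (1:ℝ))
      = EuclideanSpace.single i (1:ℝ) - ((u i) / r ^ 2) • D u := by
    intro i
    simp [hWdef, hDei i]
  have hWinner : ∀ i : Fin n, (inner ℝ u (W (EuclideanSpace.single i (1:ℝ))) : ℝ)
      = u i - u i / r ^ 2 * q := by
    intro i
    rw [hWei i, inner_sub_right, real_inner_smul_right, hq_eq,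
      real_inner_comm, hei i]
  have hterm : ∀ i : Fin n,
      ((‖x - c x‖⁻¹ • W + G.smulRight (x - c x)) (EuclideanSpace.single i 1)) i
      = r⁻¹ - (r⁻¹ * (r ^ 2)⁻¹) * (u i * D u i)
        + (-(r ^ 2)⁻¹ * r⁻¹ + (r ^ 2)⁻¹ * r⁻¹ * (r ^ 2)⁻¹ * q) * (u i * u i) := by
    intro i
    have hGei : G (EuclideanSpace.single i (1:ℝ))
        = (-(r ^ 2)⁻¹) * ((1 / (2 * r)) * ((u i - u i / r ^ 2 * q) + (u i - u i / r ^ 2 * q))) := by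
      rw [hGdef]
      simp only [ContinuousLinearMap.smul_apply, hΦdef, ContinuousLinearMap.comp_apply,
        ContinuousLinearMap.prod_apply, fderivInnerCLM_apply, smul_eq_mul]
      rw [hWinner i, real_inner_comm, hWinner i]
    simp only [ContinuousLinearMap.add_apply, ContinuousLinearMap.coe_smul',
      Pi.smul_apply, ContinuousLinearMap.smulRight_apply, hGei, hWei i]
    have : (‖x - c x‖⁻¹ • (EuclideanSpace.single i (1:ℝ) - (u i / r ^ 2) • D u)
        + ((-(r ^ 2)⁻¹) * ((1 / (2 * r)) * ((u i - u i / r ^ 2 * q) + (u i - u i / r ^ 2 * q)))) • (x - c x)) i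
        = r⁻¹ * (1 - u i / r ^ 2 * D u i)
        + ((-(r ^ 2)⁻¹) * ((1 / (2 * r)) * ((u i - u i / r ^ 2 * q) + (u i - u i / r ^ 2 * q)))) * u i := by
      rw [PiLp.add_apply, PiLp.smul_apply, PiLp.smul_apply, PiLp.sub_apply, PiLp.smul_apply]
      rw [show (x - c x) = u from rfl, show ‖x - c x‖ = r from rfl]
      simp [EuclideanSpace.single_apply, smul_eq_mul]
    rw [this]
    field_simp
    ring
  rw [Finset.sum_congr rfl fun i _ => hterm i]
  have hS1 : ∑ i, u i * u i = r ^ 2 := by rw [← hinner_vu u, hinner_uu]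
  rw [Finset.sum_add_distrib, Finset.sum_sub_distrib, Finset.sum_const, ← Finset.mul_sum,
    ← Finset.mul_sum, ← hqdef, hS1]
  simp only [Finset.card_univ, Fintype.card_fin, nsmul_eq_mul]
  field_simp
  ring
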